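/- There exists a universal constant C with the following property. Let ℓ > 0, n ≥ 1, and let P ⊂ (π/ℓ)·{1,2,3,…}³ with |P| = n be such that |p| ≤ |q| for every p ∈ P and every q ∈ (π/ℓ)·{1,2,3,…}³ ∖ P. For p ∈ P let φ_p(x) = (2/ℓ)^{3/2} ∏_{a=1}^3 sin(p_a x_a) on [0,ℓ]³, and let ρ(x) = Σ_{p∈P} φ_p(x)². Then ∫_{[0,ℓ]³} ρ(x)² dx = ℓ^{−3} Σ_{p,q∈P} ∏_{a=1}^3 ( 1 + (1/2) δ_{p_a,q_a} ), and consequently ∫_{[0,ℓ]³} ρ(x)² dx ≤ (n²/ℓ³) ( 1 + C n^{−1/3} ). -/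

import Mathlib

noncomputable section

open MeasureTheory Real
open scoped BigOperators

abbrev E3 := EuclideanSpace ℝ (Fin 3)

/-- The Dirichlet eigenfunction of the Laplacian on the cube `[0,ℓ]³` with quantum
numbers `m ∈ {1,2,…}³` (formula valid on the cube). -/
def sineEig (ℓ : ℝ) (m : Fin 3 → ℕ) (x : E3) : ℝ :=
  (2 / ℓ) ^ ((3:ℝ)/2) * ∏ a : Fin 3, Real.sin (π * (m a : ℝ) / ℓ * x a)


lemma trig_id (A B : ℝ) :
    sin A ^ 2 * sin B ^ 2 =
      1/4 - cos (2*A)/4 - cos (2*B)/4 + cos (2*A - 2*B)/8 + cos (2*A + 2*B)/8 := by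
  have hA : cos (2*A) = 1 - 2 * sin A ^ 2 := by
    rw [Real.cos_two_mul']; nlinarith [Real.sin_sq_add_cos_sq A]
  have hB : cos (2*B) = 1 - 2 * sin B ^ 2 := by
    rw [Real.cos_two_mul']; nlinarith [Real.sin_sq_add_cos_sq B]
  rw [Real.cos_sub, Real.cos_add, hA, hB]; ring

lemma cosInt (ℓ : ℝ) (hℓ : 0 < ℓ) (k : ℤ) :
    ∫ x in (0:ℝ)..ℓ, cos (2*π*k/ℓ*x) = if k = 0 then ℓ else 0 := by
  split_ifs with hk
  · simp [hk]
  · have hkr : (k:ℝ) ≠ 0 := Int.cast_ne_zero.mpr hk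
    have hc : (2*π*k/ℓ) ≠ 0 := by
      apply div_ne_zero _ hℓ.ne'
      exact mul_ne_zero (mul_ne_zero two_ne_zero Real.pi_ne_zero) hkr
    rw [intervalIntegral.integral_comp_mul_left Real.cos hc, integral_cos]
    have h1 : 2*π*k/ℓ*ℓ = (2*k) * π := by field_simp
    rw [h1]
    have : Real.sin ((((2*k) : ℤ) : ℝ) * π) = 0 := Real.sin_int_mul_pi _
    push_cast at this
    simp [this]

lemma cosIntegrable (c : ℝ) (a b : ℝ) : IntervalIntegrable (fun x => cos (c*x)) volume a b :=
  (Real.continuous_cos.comp (continuous_const.mul continuous_id)).intervalIntegrable a b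

lemma oneD (ℓ : ℝ) (hℓ : 0 < ℓ) (m m' : ℕ) (hm : 1 ≤ m) (hm' : 1 ≤ m') :
    ∫ x in Set.Icc (0:ℝ) ℓ, sin (π*m/ℓ*x)^2 * sin (π*m'/ℓ*x)^2
      = ℓ/4 * (1 + if m = m' then (1:ℝ)/2 else 0) := by
  rw [MeasureTheory.integral_Icc_eq_integral_Ioc, ← intervalIntegral.integral_of_le hℓ.le]
  have key : ∀ x : ℝ, sin (π*m/ℓ*x)^2 * sin (π*m'/ℓ*x)^2 =
      1/4 - cos (2*π*(m:ℤ)/ℓ*x)/4 - cos (2*π*(m':ℤ)/ℓ*x)/4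
      + cos (2*π*(((m:ℤ) - m'):ℤ)/ℓ*x)/8 + cos (2*π*(((m:ℤ) + m'):ℤ)/ℓ*x)/8 := by
    intro x
    have := trig_id (π*m/ℓ*x) (π*m'/ℓ*x)
    rw [this]
    push_cast
    ring_nf
  simp_rw [key]
  have i1 := cosIntegrable (2*π*(m:ℤ)/ℓ) 0 ℓ
  have i2 := cosIntegrable (2*π*(m':ℤ)/ℓ) 0 ℓ
  have i3 := cosIntegrable (2*π*(((m:ℤ)-m'):ℤ)/ℓ) 0 ℓ
  have i4 := cosIntegrable (2*π*(((m:ℤ)+m'):ℤ)/ℓ) 0 ℓ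
  have e1 : IntervalIntegrable (fun x : ℝ => 1/4 - cos (2*π*(m:ℤ)/ℓ*x)/4 - cos (2*π*(m':ℤ)/ℓ*x)/4) volume 0 ℓ :=
    (intervalIntegrable_const.sub (i1.div_const 4)).sub (i2.div_const 4)
  rw [intervalIntegral.integral_add (e1.add (i3.div_const 8)) (i4.div_const 8),
    intervalIntegral.integral_add e1 (i3.div_const 8),
    intervalIntegral.integral_sub (intervalIntegrable_const.sub (i1.div_const 4)) (i2.div_const 4),
    intervalIntegral.integral_sub intervalIntegrable_const (i1.div_const 4),
    intervalIntegral.integral_div, intervalIntegral.integral_div,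
    intervalIntegral.integral_div, intervalIntegral.integral_div, intervalIntegral.integral_div,
    cosInt ℓ hℓ, cosInt ℓ hℓ, cosInt ℓ hℓ, cosInt ℓ hℓ]
  have hm0 : (m:ℤ) ≠ 0 := by exact_mod_cast Nat.one_le_iff_ne_zero.mp hm
  have hm'0 : (m':ℤ) ≠ 0 := by exact_mod_cast Nat.one_le_iff_ne_zero.mp hm'
  have hsum : (m:ℤ) + m' ≠ 0 := by positivity
  rw [if_neg hm0, if_neg hm'0, if_neg hsum]
  simp only [intervalIntegral.integral_const, smul_eq_mul, sub_zero, mul_one]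
  have : ((m:ℤ) - m' = 0) = (m = m') := by
    simp [sub_eq_zero]
  by_cases hmm : m = m'
  · rw [if_pos (by exact_mod_cast sub_eq_zero.mpr (by exact_mod_cast hmm : (m:ℤ) = m')), if_pos hmm]
    ring
  · rw [if_neg (fun h => hmm (by exact_mod_cast sub_eq_zero.mp h)), if_neg hmm]
    ring

lemma indicator_pi {ι : Type*} [Fintype ι] (s : ι → Set ℝ) (h : ι → ℝ → ℝ) (x : ι → ℝ) :
    Set.indicator (Set.pi Set.univ s) (fun y => ∏ a, h a (y a)) x
      = ∏ a, Set.indicator (s a) (h a) (x a) := by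
  by_cases hx : x ∈ Set.pi Set.univ s
  · rw [Set.indicator_of_mem hx]
    exact Finset.prod_congr rfl fun a _ => (Set.indicator_of_mem (hx a trivial) _).symm
  · rw [Set.indicator_of_notMem hx]
    have : ∃ a, x a ∉ s a := by simpa [Set.mem_pi] using hx
    obtain ⟨a, ha⟩ := this
    exact (Finset.prod_eq_zero (Finset.mem_univ a) (Set.indicator_of_notMem ha _)).symm

lemma box_integral (ℓ : ℝ) (hℓ : 0 < ℓ) (mi mj : Fin 3 → ℕ)
    (hmi : ∀ a, 1 ≤ mi a) (hmj : ∀ a, 1 ≤ mj a) :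
    ∫ x : Fin 3 → ℝ in Set.pi Set.univ (fun _ => Set.Icc (0:ℝ) ℓ),
        ∏ a, (sin (π * mi a / ℓ * x a)^2 * sin (π * mj a / ℓ * x a)^2)
      = (ℓ/4)^3 * ∏ a : Fin 3, (1 + if mi a = mj a then (1:ℝ)/2 else 0) := by
  rw [← MeasureTheory.integral_indicator (MeasurableSet.univ_pi fun _ => measurableSet_Icc)]
  have h1 : Set.indicator (Set.pi Set.univ (fun _ => Set.Icc (0:ℝ) ℓ))
      (fun y : Fin 3 → ℝ => ∏ a, (sin (π * mi a / ℓ * y a)^2 * sin (π * mj a / ℓ * y a)^2))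
      = fun x => ∏ a, Set.indicator (Set.Icc (0:ℝ) ℓ)
          (fun t => sin (π * mi a / ℓ * t)^2 * sin (π * mj a / ℓ * t)^2) (x a) :=
    funext (indicator_pi (fun _ => Set.Icc (0:ℝ) ℓ)
      (fun a t => sin (π * mi a / ℓ * t)^2 * sin (π * mj a / ℓ * t)^2))
  rw [h1, MeasureTheory.volume_pi, MeasureTheory.integral_fintype_prod_eq_prod
    (f := fun a t => Set.indicator (Set.Icc (0:ℝ) ℓ)
      (fun t => sin (π * mi a / ℓ * t)^2 * sin (π * mj a / ℓ * t)^2) t)]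
  have h2 : ∀ a : Fin 3, (∫ t, Set.indicator (Set.Icc (0:ℝ) ℓ)
      (fun t => sin (π * mi a / ℓ * t)^2 * sin (π * mj a / ℓ * t)^2) t)
      = ℓ/4 * (1 + if mi a = mj a then (1:ℝ)/2 else 0) := by
    intro a
    rw [MeasureTheory.integral_indicator measurableSet_Icc]
    exact oneD ℓ hℓ (mi a) (mj a) (hmi a) (hmj a)
  simp_rw [h2]
  rw [Finset.prod_mul_distrib, Finset.prod_const]
  simp

lemma main_eq (ℓ : ℝ) (hℓ : 0 < ℓ) (n : ℕ) (p : Fin n → (Fin 3 → ℕ))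
    (hp1 : ∀ i a, 1 ≤ p i a) :
    (∫ x in {x : E3 | ∀ a, 0 ≤ x a ∧ x a ≤ ℓ}, (∑ i, (sineEig ℓ (p i) x) ^ 2) ^ 2)
      = ℓ ^ (-(3:ℤ)) * ∑ i : Fin n, ∑ j : Fin n,
          ∏ a : Fin 3, (1 + if p i a = p j a then (1:ℝ)/2 else 0) := by
  set c : ℝ := (2 / ℓ) ^ ((3:ℝ)/2) with hc
  set T : Set (Fin 3 → ℝ) := Set.pi Set.univ fun _ => Set.Icc (0:ℝ) ℓ with hT
  -- transfer to pi space
  have hmp := (EuclideanSpace.volume_preserving_symm_measurableEquiv_toLp (Fin 3)).symm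
  have hemb := (MeasurableEquiv.toLp 2 (Fin 3 → ℝ)).symm.symm.measurableEmbedding
  have happly : ∀ (x : Fin 3 → ℝ) (a : Fin 3),
      ((MeasurableEquiv.toLp 2 (Fin 3 → ℝ)).symm.symm x) a = x a := by
    intro x a
    rfl
  have hpre : (MeasurableEquiv.toLp 2 (Fin 3 → ℝ)).symm.symm ⁻¹' {x : E3 | ∀ a, 0 ≤ x a ∧ x a ≤ ℓ} = T := by
    ext x
    simp only [Set.mem_preimage, Set.mem_setOf_eq, hT, Set.mem_pi, Set.mem_univ, Set.mem_Icc,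
      happly, forall_const]
  have htrans := hmp.setIntegral_preimage_emb hemb
    (fun x : E3 => (∑ i, (sineEig ℓ (p i) x) ^ 2) ^ 2) {x : E3 | ∀ a, 0 ≤ x a ∧ x a ≤ ℓ}
  rw [← htrans, hpre]
  have hint : ∀ x : Fin 3 → ℝ,
      (∑ i, (sineEig ℓ (p i) ((MeasurableEquiv.toLp 2 (Fin 3 → ℝ)).symm.symm x)) ^ 2) ^ 2
      = (∑ i, (c * ∏ a : Fin 3, sin (π * (p i a : ℝ) / ℓ * x a)) ^ 2) ^ 2 := by
    intro x
    simp [sineEig, happly, ← hc]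
  simp_rw [hint]
  -- expand the square into a double sum
  have hsq : ∀ x : Fin 3 → ℝ,
      (∑ i, (c * ∏ a : Fin 3, sin (π * (p i a : ℝ) / ℓ * x a)) ^ 2) ^ 2
      = ∑ i, ∑ j, (c^4 * ∏ a : Fin 3,
          (sin (π * (p i a : ℝ) / ℓ * x a)^2 * sin (π * (p j a : ℝ) / ℓ * x a)^2)) := by
    intro x
    rw [pow_two, Finset.sum_mul_sum]
    refine Finset.sum_congr rfl fun i _ => Finset.sum_congr rfl fun j _ => ?_
    rw [Finset.prod_mul_distrib, Finset.prod_pow, Finset.prod_pow]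
    ring
  simp_rw [hsq]
  -- integrability of each term
  have hcompact : IsCompact T := isCompact_univ_pi fun _ => isCompact_Icc
  have hintg : ∀ (i j : Fin n), IntegrableOn (fun x : Fin 3 → ℝ =>
      c^4 * ∏ a : Fin 3, (sin (π * (p i a : ℝ) / ℓ * x a)^2 * sin (π * (p j a : ℝ) / ℓ * x a)^2)) T := by
    intro i j
    refine ContinuousOn.integrableOn_compact hcompact ?_
    exact Continuous.continuousOn (by fun_prop)
  rw [MeasureTheory.integral_finset_sum _ (fun i _ =>
    integrable_finset_sum _ (fun j _ => hintg i j))]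
  simp_rw [MeasureTheory.integral_finset_sum _ (fun j (_ : j ∈ Finset.univ) => hintg _ j)]
  simp_rw [MeasureTheory.integral_const_mul]
  have hbox : ∀ i j : Fin n, (∫ x : Fin 3 → ℝ in T,
      ∏ a : Fin 3, (sin (π * (p i a : ℝ) / ℓ * x a)^2 * sin (π * (p j a : ℝ) / ℓ * x a)^2))
      = (ℓ/4)^3 * ∏ a : Fin 3, (1 + if p i a = p j a then (1:ℝ)/2 else 0) := by
    intro i j
    have := box_integral ℓ hℓ (p i) (p j) (hp1 i) (hp1 j)
    exact this
  simp_rw [hbox]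
  have hconst : c^4 * (ℓ/4)^3 = ℓ ^ (-(3:ℤ)) := by
    have h2 : c^(2:ℕ) = (2/ℓ)^(3:ℕ) := by
      rw [hc, ← Real.rpow_natCast ((2/ℓ) ^ ((3:ℝ)/2)) 2, ← Real.rpow_mul (by positivity),
        ← Real.rpow_natCast (2/ℓ) 3]
      norm_num
    have h4 : c^4 = ((2/ℓ)^(3:ℕ))^2 := by rw [← h2]; ring
    rw [h4, zpow_neg, zpow_ofNat]
    field_simp
    ring
  rw [Finset.mul_sum]
  refine Finset.sum_congr rfl fun i _ => ?_
  rw [Finset.mul_sum]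
  refine Finset.sum_congr rfl fun j _ => ?_
  rw [← mul_assoc, hconst]


lemma prod3_bound (e : Fin 3 → ℝ) (h : ∀ a, e a = 0 ∨ e a = 1/2) :
    ∏ a, (1 + e a) ≤ 1 + 5 * ∑ a, e a := by
  rw [Fin.prod_univ_three, Fin.sum_univ_three]
  rcases h 0 with h0|h0 <;> rcases h 1 with h1|h1 <;> rcases h 2 with h2|h2 <;>
    rw [h0, h1, h2] <;> norm_num

lemma comb_bound (n : ℕ) (hn : 1 ≤ n) (p : Fin n → (Fin 3 → ℕ))
    (hinj : Function.Injective p)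
    (hp1 : ∀ i a, 1 ≤ p i a)
    (hmin : ∀ i, ∀ m' : Fin 3 → ℕ, (∀ a, 1 ≤ m' a) → (∀ j, p j ≠ m') →
      (∑ a, (p i a) ^ 2) ≤ ∑ a, (m' a) ^ 2) :
    ∃ M : ℕ, M ^ 3 ≤ 8 * n ∧
      ∑ i : Fin n, ∑ j : Fin n, ∏ a : Fin 3, (1 + if p i a = p j a then (1:ℝ)/2 else 0)
        ≤ (n:ℝ)^2 + 30 * n * M^2 := by
  -- Step A: minimal M with n < M^3
  have hex : ∃ M : ℕ, n < M ^ 3 := ⟨n + 1, lt_of_lt_of_le (Nat.lt_succ_self n) (Nat.le_self_pow (by norm_num) _)⟩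
  set M := Nat.find hex with hMdef
  have hM : n < M ^ 3 := Nat.find_spec hex
  have hM2 : 2 ≤ M := by
    by_contra h
    interval_cases M <;> omega
  have hMub : M ^ 3 ≤ 8 * n := by
    have h1 : ¬ n < (M - 1) ^ 3 := Nat.find_min hex (by omega)
    push_neg at h1
    have h2 : M ≤ 2 * (M - 1) := by omega
    calc M ^ 3 ≤ (2 * (M - 1)) ^ 3 := Nat.pow_le_pow_left h2 3
      _ = 8 * (M - 1) ^ 3 := by ring
      _ ≤ 8 * n := by omega
  refine ⟨M, hMub, ?_⟩
  -- Step B: find m' outside the range in the cube [1,M]^3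
  have hcube : ¬ (Fintype.piFinset fun _ : Fin 3 => Finset.Icc 1 M) ⊆
      Finset.image p Finset.univ := by
    intro h
    have h1 := Finset.card_le_card h
    rw [Fintype.card_piFinset] at h1
    simp [Nat.card_Icc] at h1
    have h2 : (Finset.image p Finset.univ).card ≤ n := by
      calc (Finset.image p Finset.univ).card ≤ (Finset.univ : Finset (Fin n)).card :=
        Finset.card_image_le
        _ = n := by simp
    omega
  obtain ⟨m', hm'mem, hm'not⟩ := Finset.not_subset.mp hcube
  rw [Fintype.mem_piFinset] at hm'mem
  have hm'1 : ∀ a, 1 ≤ m' a := fun a => (Finset.mem_Icc.mp (hm'mem a)).1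
  have hm'M : ∀ a, m' a ≤ M := fun a => (Finset.mem_Icc.mp (hm'mem a)).2
  have hne : ∀ j, p j ≠ m' := by
    intro j hj
    exact hm'not (Finset.mem_image.mpr ⟨j, Finset.mem_univ j, hj⟩)
  -- Step C: energy bound and coordinate bound
  have hE : ∀ i, ∑ a, (p i a) ^ 2 ≤ 3 * M ^ 2 := by
    intro i
    calc ∑ a, (p i a) ^ 2 ≤ ∑ a, (m' a) ^ 2 := hmin i m' hm'1 hne
      _ ≤ ∑ _a : Fin 3, M ^ 2 := Finset.sum_le_sum fun a _ => Nat.pow_le_pow_left (hm'M a) 2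
      _ = 3 * M ^ 2 := by rw [Finset.sum_const]; simp
  have hcoord : ∀ i a, p i a ≤ 2 * M := by
    intro i a
    by_contra h
    push_neg at h
    have h1 : (p i a) ^ 2 ≤ ∑ b, (p i b) ^ 2 :=
      Finset.single_le_sum (f := fun b => (p i b) ^ 2) (fun b _ => Nat.zero_le _)
        (Finset.mem_univ a)
    have := hE i
    nlinarith
  -- Step D: counting
  have hcount : ∀ i a, (Finset.univ.filter fun j => p i a = p j a).card ≤ 4 * M ^ 2 := by
    intro i a
    have hsub : ∀ j ∈ Finset.univ.filter (fun j => p i a = p j a),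
        p j ∈ Fintype.piFinset (fun b => if b = a then ({p i a} : Finset ℕ)
          else Finset.Icc 1 (2 * M)) := by
      intro j hj
      rw [Finset.mem_filter] at hj
      rw [Fintype.mem_piFinset]
      intro b
      by_cases hba : b = a
      · subst hba; simp [hj.2.symm]
      · simp [hba, Finset.mem_Icc, hp1 j b, hcoord j b]
    calc (Finset.univ.filter fun j => p i a = p j a).card
        ≤ (Fintype.piFinset (fun b => if b = a then ({p i a} : Finset ℕ)
            else Finset.Icc 1 (2 * M))).card :=
          Finset.card_le_card_of_injOn p hsub (fun x _ y _ h => hinj h)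
      _ = ∏ b : Fin 3, (if b = a then ({p i a} : Finset ℕ)
            else Finset.Icc 1 (2 * M)).card := Fintype.card_piFinset _
      _ ≤ 4 * M ^ 2 := by
          rw [Fin.prod_univ_three]
          fin_cases a <;> simp [Nat.card_Icc] <;> ring_nf <;> omega
  -- Step E: the real sum bound
  have hterm : ∀ i j, ∏ a : Fin 3, (1 + if p i a = p j a then (1:ℝ)/2 else 0)
      ≤ 1 + 5 * ∑ a : Fin 3, (if p i a = p j a then (1:ℝ)/2 else 0) := by
    intro i j
    exact prod3_bound _ (fun a => by split_ifs <;> simp)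
  have hinner : ∀ i a, ∑ j, (if p i a = p j a then (1:ℝ)/2 else 0) ≤ 2 * M ^ 2 := by
    intro i a
    rw [← Finset.sum_filter]
    rw [Finset.sum_const]
    have := hcount i a
    have hcast : ((Finset.univ.filter fun j => p i a = p j a).card : ℝ) ≤ 4 * M ^ 2 := by
      exact_mod_cast this
    rw [nsmul_eq_mul]
    nlinarith
  calc ∑ i : Fin n, ∑ j : Fin n, ∏ a : Fin 3, (1 + if p i a = p j a then (1:ℝ)/2 else 0)
      ≤ ∑ i : Fin n, ∑ j : Fin n,
          (1 + 5 * ∑ a : Fin 3, (if p i a = p j a then (1:ℝ)/2 else 0)) :=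
        Finset.sum_le_sum fun i _ => Finset.sum_le_sum fun j _ => hterm i j
    _ = (n:ℝ)^2 + 5 * ∑ i : Fin n, ∑ a : Fin 3,
          ∑ j : Fin n, (if p i a = p j a then (1:ℝ)/2 else 0) := by
        simp only [Finset.sum_add_distrib, Finset.sum_const, Finset.card_univ,
          Fintype.card_fin, nsmul_eq_mul, Finset.mul_sum]
        exact congrArg₂ (· + ·) (by ring) (Finset.sum_congr rfl fun x _ => Finset.sum_comm)
    _ ≤ (n:ℝ)^2 + 5 * ∑ i : Fin n, ∑ a : Fin 3, (2 * (M:ℝ) ^ 2) := by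
        gcongr with i _ a
        exact hinner i a
    _ ≤ (n:ℝ)^2 + 30 * n * M^2 := by
        simp [Finset.sum_const, Finset.card_univ]
        ring_nf
        norm_num

theorem density_squared_integral :
    ∃ C : ℝ, ∀ (ℓ : ℝ) (n : ℕ) (p : Fin n → (Fin 3 → ℕ)),
      0 < ℓ → 1 ≤ n →
      Function.Injective p →
      (∀ i a, 1 ≤ p i a) →
      (∀ i, ∀ m' : Fin 3 → ℕ, (∀ a, 1 ≤ m' a) → (∀ j, p j ≠ m') →
        (∑ a, (p i a) ^ 2) ≤ ∑ a, (m' a) ^ 2) →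
      ((∫ x in {x : E3 | ∀ a, 0 ≤ x a ∧ x a ≤ ℓ},
            (∑ i, (sineEig ℓ (p i) x) ^ 2) ^ 2)
          = ℓ ^ (-(3:ℤ)) * ∑ i : Fin n, ∑ j : Fin n,
              ∏ a : Fin 3, (1 + if p i a = p j a then (1:ℝ)/2 else 0))
      ∧ (∫ x in {x : E3 | ∀ a, 0 ≤ x a ∧ x a ≤ ℓ},
            (∑ i, (sineEig ℓ (p i) x) ^ 2) ^ 2)
          ≤ ((n : ℝ) ^ 2 / ℓ ^ 3) * (1 + C * (n : ℝ) ^ (-(1:ℝ)/3)) := by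
  refine ⟨120, fun ℓ n p hℓ hn hinj hp1 hmin => ?_⟩
  have heq := main_eq ℓ hℓ n p hp1
  refine ⟨heq, ?_⟩
  rw [heq]
  obtain ⟨M, hM3, hS⟩ := comb_bound n hn p hinj hp1 hmin
  set N : ℝ := (n : ℝ) with hN
  have hNpos : (0:ℝ) < N := by
    rw [hN]; exact_mod_cast Nat.lt_of_lt_of_le Nat.zero_lt_one hn
  have hMnn : (0:ℝ) ≤ (M:ℝ) := Nat.cast_nonneg M
  have hMR : ((M:ℝ))^3 ≤ 8*N := by rw [hN]; exact_mod_cast hM3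
  have hM2 : ((M:ℝ))^2 ≤ 4 * N^((2:ℝ)/3) := by
    have h := Real.rpow_le_rpow (by positivity) hMR (by norm_num : (0:ℝ) ≤ 2/3)
    have l1 : (((M:ℝ))^3)^((2:ℝ)/3) = ((M:ℝ))^2 := by
      rw [← Real.rpow_natCast (M:ℝ) 3, ← Real.rpow_mul hMnn, ← Real.rpow_natCast (M:ℝ) 2]
      norm_num
    have l2 : ((8:ℝ)*N)^((2:ℝ)/3) = 4 * N^((2:ℝ)/3) := by
      rw [Real.mul_rpow (by norm_num) hNpos.le]
      congr 1
      rw [show (8:ℝ) = (2:ℝ)^(3:ℕ) by norm_num, ← Real.rpow_natCast (2:ℝ) 3,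
        ← Real.rpow_mul (by norm_num)]
      rw [show ((3:ℕ):ℝ) * ((2:ℝ)/3) = 2 by norm_num]
      rw [show (2:ℝ) = ((2:ℕ):ℝ) by norm_num, Real.rpow_natCast]
      norm_num
    rw [l1, l2] at h
    exact h
  have h53 : N * N^((2:ℝ)/3) = N^2 * N^(-(1:ℝ)/3) := by
    have e1 : N * N^((2:ℝ)/3) = N^((5:ℝ)/3) := by
      nth_rewrite 1 [← Real.rpow_one N]
      rw [← Real.rpow_add hNpos]; norm_num
    have e2 : N^(2:ℕ) * N^(-(1:ℝ)/3) = N^((5:ℝ)/3) := by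
      rw [← Real.rpow_natCast N 2, ← Real.rpow_add hNpos]; norm_num
    rw [e1, ← e2]
  have hSfinal : ∑ i : Fin n, ∑ j : Fin n,
      ∏ a : Fin 3, (1 + if p i a = p j a then (1:ℝ)/2 else 0)
      ≤ N^2 * (1 + 120 * N^(-(1:ℝ)/3)) := by
    calc ∑ i : Fin n, ∑ j : Fin n, ∏ a : Fin 3, (1 + if p i a = p j a then (1:ℝ)/2 else 0)
        ≤ (n:ℝ)^2 + 30 * n * (M:ℝ)^2 := hS
      _ ≤ N^2 + 30 * N * (4 * N^((2:ℝ)/3)) := by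
          rw [← hN]
          have : (0:ℝ) ≤ 30 * N := by positivity
          nlinarith
      _ = N^2 + 120 * (N * N^((2:ℝ)/3)) := by ring
      _ = N^2 * (1 + 120 * N^(-(1:ℝ)/3)) := by rw [h53]; ring
  have hz : ℓ^(-(3:ℤ)) = (ℓ^3)⁻¹ := by
    rw [zpow_neg]
    norm_cast
  rw [hz]
  have hrhs : (N^2 / ℓ^3) * (1 + 120 * N^(-(1:ℝ)/3))
      = (ℓ^3)⁻¹ * (N^2 * (1 + 120 * N^(-(1:ℝ)/3))) := by ring
  rw [hrhs]
  exact mul_le_mul_of_nonneg_left hSfinal (by positivity)
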